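/- For three irreducible fractions x < y < z, the numerator of z − x is divisible by gcd(numerator of y − x, numerator of z − y); more precisely, writing d(a/b, c/e) = c*b − a*e for reduced fractions, gcd(d(x,y), d(y,z)) = gcd(d(x,y), d(x,z)) = gcd(d(x,z), d(y,z)). -/

import Mathlib

/-- The Farey determinant of two (reduced) fractions  and . -/
def fdet (x y : ℚ) : ℤ := y.num * (x.den : ℤ) - x.num * (y.den : ℤ)

lemma fdet_key (d a num den : ℤ) (h : IsCoprime num den)
    (h1 : d ∣ a * num) (h2 : d ∣ a * den) : d ∣ a := by
  obtain ⟨u, v, huv⟩ := h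
  have : a = u * (a * num) + v * (a * den) := by linear_combination a * huv.symm
  rw [this]
  exact dvd_add (h1.mul_left u) (h2.mul_left v)

lemma rat_coprime (q : ℚ) : IsCoprime q.num (q.den : ℤ) := by
  rw [Int.isCoprime_iff_gcd_eq_one]
  simpa [Int.gcd] using q.reduced

theorem fdet_gcd_triple (x y z : ℚ) (hxy : x < y) (hyz : y < z) :
    ((Int.gcd (fdet x y) (fdet y z) : ℤ) ∣ fdet x z) ∧
    Int.gcd (fdet x y) (fdet y z) = Int.gcd (fdet x y) (fdet x z) ∧
    Int.gcd (fdet x y) (fdet x z) = Int.gcd (fdet x z) (fdet y z) := by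
  set A := fdet x y with hA
  set B := fdet y z with hB
  set C := fdet x z with hC
  have iden : C * (y.den : ℤ) = A * z.den + B * x.den := by
    simp only [hA, hB, hC, fdet]; ring
  have inum : C * y.num = A * z.num + B * x.num := by
    simp only [hA, hB, hC, fdet]; ring
  -- gcd A B divides C
  have gAB_C : (Int.gcd A B : ℤ) ∣ C := by
    apply fdet_key _ _ _ _ (rat_coprime y)
    · rw [inum]
      exact dvd_add ((Int.gcd_dvd_left _ _).mul_right _) ((Int.gcd_dvd_right _ _).mul_right _)
    · rw [iden]
      exact dvd_add ((Int.gcd_dvd_left _ _).mul_right _) ((Int.gcd_dvd_right _ _).mul_right _)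
  -- gcd A C divides B
  have gAC_B : (Int.gcd A C : ℤ) ∣ B := by
    apply fdet_key _ _ _ _ (rat_coprime x)
    · have : B * x.num = C * y.num - A * z.num := by linear_combination -inum
      rw [this]
      exact dvd_sub ((Int.gcd_dvd_right _ _).mul_right _) ((Int.gcd_dvd_left _ _).mul_right _)
    · have : B * (x.den : ℤ) = C * y.den - A * z.den := by linear_combination -iden
      rw [this]
      exact dvd_sub ((Int.gcd_dvd_right _ _).mul_right _) ((Int.gcd_dvd_left _ _).mul_right _)
  -- gcd C B divides A
  have gCB_A : (Int.gcd C B : ℤ) ∣ A := by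
    apply fdet_key _ _ _ _ (rat_coprime z)
    · have : A * z.num = C * y.num - B * x.num := by linear_combination -inum
      rw [this]
      exact dvd_sub ((Int.gcd_dvd_left _ _).mul_right _) ((Int.gcd_dvd_right _ _).mul_right _)
    · have : A * (z.den : ℤ) = C * y.den - B * x.den := by linear_combination -iden
      rw [this]
      exact dvd_sub ((Int.gcd_dvd_left _ _).mul_right _) ((Int.gcd_dvd_right _ _).mul_right _)
  refine ⟨gAB_C, ?_, ?_⟩
  · apply Nat.dvd_antisymm
    · exact Int.natCast_dvd_natCast.mp (Int.dvd_coe_gcd (Int.gcd_dvd_left _ _) gAB_C)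
    · exact Int.natCast_dvd_natCast.mp (Int.dvd_coe_gcd (Int.gcd_dvd_left _ _) gAC_B)
  · apply Nat.dvd_antisymm
    · exact Int.natCast_dvd_natCast.mp (Int.dvd_coe_gcd (Int.gcd_dvd_right _ _) gAC_B)
    · exact Int.natCast_dvd_natCast.mp (Int.dvd_coe_gcd gCB_A (Int.gcd_dvd_left _ _))
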